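/- (Barrier from discrete-time Lyapunov function) Let A ⊆ D ⊆ ℝⁿ with A closed, D open, and V : D → ℝ satisfy α₁(dist(x,A)) ≤ V(x) ≤ α₂(dist(x,A)) for x ∈ D, and V(f(x)+d) − V(x) ≤ −α₃(dist(x,A)) for all x ∈ D with f(x)+d ∈ D and ‖d‖ ≤ δ, where α₁,α₂,α₃ are class-K. Then B := −V satisfies: B ≥ 0 on A, B < 0 on D \ A, and B(f(x)+d) − B(x) ≥ −α(B(x)) for all such x, d, where α(s) := −α₃(α₂⁻¹(−s)) is increasing on (−a, 0] with α(0) = 0; in particular B(f(x)+d) ≥ 0 whenever B(x) ≥ 0. -/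

import Mathlib

open Metric Set

/-- A class-K function: continuous, strictly increasing, vanishing at 0 (on `[0,∞)`). -/
def IsClassK (α : ℝ → ℝ) : Prop :=
  α 0 = 0 ∧ StrictMonoOn α (Ici (0 : ℝ)) ∧ ContinuousOn α (Ici (0 : ℝ))

/-- Barrier from a discrete-time Lyapunov function: `B := -V` is nonnegative on `A`,
negative on `D \ A`, and satisfies `B(f(x)+d) - B(x) ≥ -α(B(x))` with
`α(s) := -α₃(α₂⁻¹(-s))` increasing on `(-a, 0]` with `α(0) = 0`; in particular
`B(f(x)+d) ≥ 0` whenever `B(x) ≥ 0`. -/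
theorem discrete_barrier_from_lyapunov {n : ℕ}
    (f : EuclideanSpace ℝ (Fin n) → EuclideanSpace ℝ (Fin n)) (δ : ℝ) (hδ : 0 ≤ δ)
    (D : Set (EuclideanSpace ℝ (Fin n))) (hD : IsOpen D)
    (A : Set (EuclideanSpace ℝ (Fin n))) (hA : IsClosed A) (hAD : A ⊆ D)
    (hAne : A.Nonempty)
    (V : EuclideanSpace ℝ (Fin n) → ℝ)
    (α₁ α₂ α₃ : ℝ → ℝ) (hα₁ : IsClassK α₁) (hα₂ : IsClassK α₂) (hα₃ : IsClassK α₃)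
    (α₂inv : ℝ → ℝ)
    (hinvL : ∀ s : ℝ, 0 ≤ s → α₂inv (α₂ s) = s)
    (hinvR : ∀ t ∈ α₂ '' Ici (0 : ℝ), α₂ (α₂inv t) = t)
    (hbound : ∀ x ∈ D, α₁ (infDist x A) ≤ V x ∧ V x ≤ α₂ (infDist x A))
    (hdecr : ∀ x ∈ D, ∀ d : EuclideanSpace ℝ (Fin n), ‖d‖ ≤ δ → f x + d ∈ D →
      V (f x + d) - V x ≤ -α₃ (infDist x A)) :
    (∀ x ∈ A, 0 ≤ -V x) ∧
    (∀ x ∈ D \ A, -V x < 0) ∧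
    (∀ x ∈ D, ∀ d : EuclideanSpace ℝ (Fin n), ‖d‖ ≤ δ → f x + d ∈ D →
      -((fun s : ℝ => -α₃ (α₂inv (-s))) (-V x)) ≤ (-V (f x + d)) - (-V x)) ∧
    (∃ a > (0 : ℝ), StrictMonoOn (fun s : ℝ => -α₃ (α₂inv (-s))) (Ioc (-a) 0) ∧
      (fun s : ℝ => -α₃ (α₂inv (-s))) 0 = 0) ∧
    (∀ x ∈ D, ∀ d : EuclideanSpace ℝ (Fin n), ‖d‖ ≤ δ → f x + d ∈ D →
      0 ≤ -V x → 0 ≤ -V (f x + d)) := by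
  obtain ⟨h10, h1m, h1c⟩ := hα₁
  obtain ⟨h20, h2m, h2c⟩ := hα₂
  obtain ⟨h30, h3m, h3c⟩ := hα₃
  have hVnn : ∀ x ∈ D, 0 ≤ V x := by
    intro x hx
    have h := (hbound x hx).1
    have : α₁ 0 ≤ α₁ (infDist x A) :=
      h1m.monotoneOn (mem_Ici.mpr (le_refl 0)) (mem_Ici.mpr infDist_nonneg) (infDist_nonneg)
    linarith [h10 ▸ this]
  have hdistA : ∀ x ∈ A, infDist x A = 0 := fun x hx => infDist_zero_of_mem hx
  refine ⟨?_, ?_, ?_, ?_, ?_⟩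
  · intro x hx
    have h := (hbound x (hAD hx)).2
    rw [hdistA x hx, h20] at h
    linarith
  · intro x hx
    have hpos : 0 < infDist x A := (hA.notMem_iff_infDist_pos hAne).mp hx.2
    have h := (hbound x hx.1).1
    have : α₁ 0 < α₁ (infDist x A) := h1m (mem_Ici.mpr (le_refl 0)) (mem_Ici.mpr (le_of_lt hpos)) hpos
    rw [h10] at this
    linarith
  · intro x hx d hd hfd
    simp only [neg_neg]
    have hVx := hbound x hx
    -- V x is in the image of α₂ on [0, infDist x A]
    have hIVT : V x ∈ α₂ '' Icc 0 (infDist x A) := by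
      apply intermediate_value_Icc infDist_nonneg
        (h2c.mono (fun t ht => ht.1))
      exact ⟨by rw [h20]; exact hVnn x hx, hVx.2⟩
    obtain ⟨t, ht, htV⟩ := hIVT
    have hinv : α₂inv (V x) = t := htV ▸ hinvL t ht.1
    have hle : α₃ (α₂inv (V x)) ≤ α₃ (infDist x A) := by
      rw [hinv]
      exact h3m.monotoneOn ht.1 infDist_nonneg ht.2
    have := hdecr x hx d hd hfd
    linarith
  · refine ⟨α₂ 1, by have := h2m (mem_Ici.mpr le_rfl) (mem_Ici.mpr zero_le_one) one_pos; linarith, ?_, ?_⟩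
    · intro s hs t ht hst
      have key : ∀ u ∈ Ioc (-(α₂ 1)) (0 : ℝ), ∃ r ∈ Icc (0:ℝ) 1, α₂ r = -u ∧ α₂inv (-u) = r := by
        intro u hu
        have : -u ∈ α₂ '' Icc (0:ℝ) 1 := by
          apply intermediate_value_Icc zero_le_one (h2c.mono (fun r hr => hr.1))
          exact ⟨by rw [h20]; exact neg_nonneg.mpr hu.2, le_of_lt (by linarith [hu.1])⟩
        obtain ⟨r, hr, hru⟩ := this
        exact ⟨r, hr, hru, hru ▸ hinvL r hr.1⟩
      obtain ⟨rs, hrs, hrs2, hrs3⟩ := key s hs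
      obtain ⟨rt, hrt, hrt2, hrt3⟩ := key t ht
      have hrlt : rt < rs := by
        by_contra h
        push_neg at h
        have := h2m.monotoneOn hrs.1 hrt.1 h
        rw [hrs2, hrt2] at this
        linarith
      have : α₃ rt < α₃ rs := h3m hrt.1 hrs.1 hrlt
      simp only [hrs3, hrt3]
      linarith
    · simp only [neg_zero]
      have : α₂inv 0 = 0 := by
        calc α₂inv 0 = α₂inv (α₂ 0) := by rw [h20]
        _ = 0 := hinvL 0 le_rfl
      rw [this, h30, neg_zero]
  · intro x hx d hd hfd hBx
    have hVx0 : V x ≤ 0 := by linarith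
    have hdist0 : infDist x A = 0 := by
      by_contra h
      have hpos : 0 < infDist x A := lt_of_le_of_ne infDist_nonneg (Ne.symm h)
      have : α₁ 0 < α₁ (infDist x A) := h1m (mem_Ici.mpr (le_refl 0)) (mem_Ici.mpr (le_of_lt hpos)) hpos
      rw [h10] at this
      linarith [(hbound x hx).1]
    have := hdecr x hx d hd hfd
    rw [hdist0, h30] at this
    linarith
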